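/- For every λ > 0 and all real numbers A, B with (A,B) ≠ (0,0), and every C¹ function φ on ℝ supported in [-1,1], |∫_ℝ e^{iλ(At² + Bt)} φ(t) dt| ≤ C (λ(|A| + |B|))^{-1/2} sup_{|t|≤1}(|φ(t)| + |φ'(t)|) for an absolute constant C. -/

import Mathlib

open MeasureTheory Real

-- derivative of the phase exponential
lemma sw_he (L A B : ℝ) (t : ℝ) :
    HasDerivAt (fun t : ℝ => Complex.exp (Complex.I * L * ((A*t^2 + B*t : ℝ) : ℂ)))
      (Complex.I * L * ((2*A*t + B : ℝ) : ℂ) *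
        Complex.exp (Complex.I * L * ((A*t^2 + B*t : ℝ) : ℂ))) t := by
  have h1 : HasDerivAt (fun t : ℝ => A*t^2 + B*t) (2*A*t + B) t := by
    have := ((hasDerivAt_pow 2 t).const_mul A).add ((hasDerivAt_id t).const_mul B)
    refine this.congr_deriv ?_
    ring
  have h2 := (h1.ofReal_comp.const_mul (Complex.I * L)).cexp
  convert h2 using 1
  ring

-- derivative of the amplitude h
lemma sw_hh (L A B : ℝ) (φ : ℝ → ℂ) (hφ : ContDiff ℝ 1 φ) (t : ℝ)
    (hne : Complex.I * L * ((2*A*t + B : ℝ) : ℂ) ≠ 0) :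
    HasDerivAt (fun t : ℝ => φ t / (Complex.I * L * ((2*A*t + B : ℝ) : ℂ)))
      ((deriv φ t * (Complex.I * L * ((2*A*t + B : ℝ) : ℂ)) -
        φ t * (Complex.I * L * ((2*A : ℝ) : ℂ))) / (Complex.I * L * ((2*A*t + B : ℝ) : ℂ))^2) t := by
  have hφd : HasDerivAt φ (deriv φ t) t :=
    ((hφ.differentiable one_ne_zero) t).hasDerivAt
  have h1 : HasDerivAt (fun t : ℝ => 2*A*t + B) (2*A) t := by
    have := ((hasDerivAt_id t).const_mul (2*A)).add_const B
    refine this.congr_deriv ?_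
    ring
  have h2 : HasDerivAt (fun t : ℝ => Complex.I * L * ((2*A*t + B : ℝ) : ℂ))
      (Complex.I * L * ((2*A : ℝ) : ℂ)) t := h1.ofReal_comp.const_mul _
  exact hφd.div h2 hne

-- bound on the integral of 2|A|/(p t)^2
lemma sw_int (A B m : ℝ) (a b : ℝ) (hab : a ≤ b) (hm : 0 < m)
    (hlow : ∀ t ∈ Set.Icc a b, m ≤ |2*A*t + B|) :
    2*|A| * ∫ t in a..b, ((2*A*t + B)^2)⁻¹ ≤ 2/m := by
  rcases eq_or_ne A 0 with hA | hA
  · simp [hA]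
    positivity
  · have h2A : (2*A) ≠ 0 := by simp [hA]
    have hpne : ∀ t ∈ Set.Icc a b, 2*A*t + B ≠ 0 := fun t ht => by
      have := hlow t ht
      intro h; rw [h] at this; simp at this; linarith
    have hF : ∀ t ∈ Set.uIcc a b, HasDerivAt (fun t => -(2*A)⁻¹ * (2*A*t + B)⁻¹)
        (((2*A*t + B)^2)⁻¹) t := by
      intro t ht
      rw [Set.uIcc_of_le hab] at ht
      have h1 : HasDerivAt (fun t : ℝ => 2*A*t + B) (2*A) t := by
        have := ((hasDerivAt_id t).const_mul (2*A)).add_const B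
        refine this.congr_deriv ?_
        ring
      have h2 := (h1.inv (hpne t ht)).const_mul (-(2*A)⁻¹)
      refine h2.congr_deriv ?_
      field_simp
    have hcont : ContinuousOn (fun t => ((2*A*t + B)^2)⁻¹) (Set.uIcc a b) := by
      rw [Set.uIcc_of_le hab]
      exact ContinuousOn.inv₀ (by fun_prop) (fun t ht => pow_ne_zero 2 (hpne t ht))
    have hint : IntervalIntegrable (fun t => ((2*A*t + B)^2)⁻¹) volume a b :=
      hcont.intervalIntegrable
    rw [intervalIntegral.integral_eq_sub_of_hasDerivAt hF hint]
    have hpa := hpne a ⟨le_refl a, hab⟩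
    have hpb := hpne b ⟨hab, le_refl b⟩
    have hma := hlow a ⟨le_refl a, hab⟩
    have hmb := hlow b ⟨hab, le_refl b⟩
    have h1 : |(2*A*b + B)⁻¹| ≤ m⁻¹ := by
      rw [abs_inv]
      exact inv_anti₀ hm hmb
    have h2 : |(2*A*a + B)⁻¹| ≤ m⁻¹ := by
      rw [abs_inv]
      exact inv_anti₀ hm hma
    have key : |(-(2*A)⁻¹ * (2*A*b + B)⁻¹) - (-(2*A)⁻¹ * (2*A*a + B)⁻¹)| ≤ |(2*A)⁻¹| * (2/m) := by
      rw [← mul_sub, abs_mul, abs_neg]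
      have := abs_sub ((2*A*b + B)⁻¹) ((2*A*a + B)⁻¹)
      have habs : |(2*A*b + B)⁻¹ - (2*A*a + B)⁻¹| ≤ 2/m := by
        calc |(2*A*b + B)⁻¹ - (2*A*a + B)⁻¹| ≤ |(2*A*b + B)⁻¹| + |(2*A*a + B)⁻¹| :=
              abs_sub _ _
          _ ≤ m⁻¹ + m⁻¹ := add_le_add h1 h2
          _ = 2/m := by ring
      exact mul_le_mul_of_nonneg_left habs (abs_nonneg _)
    have h2Aabs : 2*|A| * |(2*A)⁻¹| = 1 := by
      have : |A| ≠ 0 := by simpa using hA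
      rw [abs_inv, abs_mul]
      rw [abs_two]
      field_simp
    calc 2*|A| * ((-(2*A)⁻¹ * (2*A*b + B)⁻¹) - (-(2*A)⁻¹ * (2*A*a + B)⁻¹))
        ≤ 2*|A| * |(-(2*A)⁻¹ * (2*A*b + B)⁻¹) - (-(2*A)⁻¹ * (2*A*a + B)⁻¹)| := by
          apply mul_le_mul_of_nonneg_left (le_abs_self _) (by positivity)
      _ ≤ 2*|A| * (|(2*A)⁻¹| * (2/m)) := mul_le_mul_of_nonneg_left key (by positivity)
      _ = (2*|A| * |(2*A)⁻¹|) * (2/m) := by ring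
      _ = 2/m := by rw [h2Aabs]; ring

lemma sw_norm_exp (L A B t : ℝ) :
    ‖Complex.exp (Complex.I * L * ((A*t^2 + B*t : ℝ) : ℂ))‖ = 1 := by
  have h : Complex.I * L * ((A*t^2 + B*t : ℝ) : ℂ)
      = Complex.I * ((L * (A*t^2 + B*t) : ℝ) : ℂ) := by push_cast; ring
  rw [h, Complex.norm_exp]
  have h2 : (Complex.I * ((L * (A*t^2 + B*t) : ℝ):ℂ)).re = 0 := by
    rw [Complex.mul_re, Complex.I_re, Complex.I_im, Complex.ofReal_re, Complex.ofReal_im]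
    ring
  rw [h2, Real.exp_zero]

lemma sw_normK (L C : ℝ) (hL : 0 < L) :
    ‖Complex.I * (L:ℂ) * ((C : ℝ):ℂ)‖ = L * |C| := by
  rw [norm_mul, norm_mul, Complex.norm_I, Complex.norm_real, Complex.norm_real]
  simp [abs_of_pos hL, Real.norm_eq_abs]

lemma sw_arith (L m x M Aa : ℝ) (hL : 0 < L) (hm : 0 < m) (hx : m ≤ x) (hM0 : 0 ≤ M)
    (hA : 0 ≤ Aa) :
    (M * (L * x) + M * (L * (2*Aa))) / (L * x)^2 ≤ M / (L * m) + (2 * Aa * M / L) * (x^2)⁻¹ := by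
  have hx0 : 0 < x := lt_of_lt_of_le hm hx
  have e1 : (M * (L * x) + M * (L * (2*Aa))) / (L * x)^2
      = M / (L * x) + (2 * Aa * M / L) * (x^2)⁻¹ := by
    field_simp
  rw [e1]
  have e2 : M / (L * x) ≤ M / (L * m) := by
    gcongr
  linarith

lemma sw_ibp (L A B : ℝ) (hL : 0 < L) (φ : ℝ → ℂ) (hφ : ContDiff ℝ 1 φ)
    (M : ℝ) (hM : ∀ t ∈ Set.Icc (-1:ℝ) 1, ‖φ t‖ + ‖deriv φ t‖ ≤ M)
    (a b m : ℝ) (hab : a ≤ b) (ha : -1 ≤ a) (hb : b ≤ 1) (hm : 0 < m)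
    (hlow : ∀ t ∈ Set.Icc a b, m ≤ |2*A*t + B|) :
    ‖∫ t in a..b, Complex.exp (Complex.I * L * ((A*t^2 + B*t : ℝ):ℂ)) * φ t‖
      ≤ 6 * M / (L * m) := by
  have huIcc : Set.uIcc a b = Set.Icc a b := Set.uIcc_of_le hab
  have hsub : Set.Icc a b ⊆ Set.Icc (-1:ℝ) 1 := Set.Icc_subset_Icc ha hb
  have hM0 : 0 ≤ M := le_trans (by positivity) (hM 0 ⟨by norm_num, by norm_num⟩)
  have hK : (Complex.I * (L:ℂ)) ≠ 0 := by
    simp [Complex.I_ne_zero, Complex.ext_iff]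
    exact ne_of_gt hL
  have hpne : ∀ t ∈ Set.Icc a b, (2*A*t + B) ≠ 0 := fun t ht => by
    have := hlow t ht
    intro h; rw [h] at this; simp at this; linarith
  have hKp_ne : ∀ t ∈ Set.Icc a b, Complex.I * L * ((2*A*t + B : ℝ):ℂ) ≠ 0 := fun t ht =>
    mul_ne_zero hK (by exact_mod_cast hpne t ht)
  have hKp_norm : ∀ t : ℝ, ‖Complex.I * (L:ℂ) * ((2*A*t + B : ℝ):ℂ)‖ = L * |2*A*t + B| :=
    fun t => sw_normK L (2*A*t+B) hL
  have hφc : Continuous φ := hφ.continuous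
  have hφ'c : Continuous (deriv φ) := hφ.continuous_deriv le_rfl
  set e : ℝ → ℂ := fun t => Complex.exp (Complex.I * L * ((A*t^2 + B*t : ℝ):ℂ)) with he_def
  set h : ℝ → ℂ := fun t => φ t / (Complex.I * L * ((2*A*t + B : ℝ):ℂ)) with hh_def
  set h' : ℝ → ℂ := fun t => (deriv φ t * (Complex.I * L * ((2*A*t + B : ℝ):ℂ)) -
      φ t * (Complex.I * L * ((2*A : ℝ):ℂ))) / (Complex.I * L * ((2*A*t + B : ℝ):ℂ))^2
    with hh'_def
  have hec : Continuous e := by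
    apply Complex.continuous_exp.comp
    fun_prop
  have henorm : ∀ t, ‖e t‖ = 1 := fun t => sw_norm_exp L A B t
  have hh'cont : ContinuousOn h' (Set.uIcc a b) := by
    rw [huIcc]
    apply ContinuousOn.div
    · fun_prop
    · fun_prop
    · exact fun t ht => pow_ne_zero 2 (hKp_ne t ht)
  have hh'int : IntervalIntegrable h' volume a b := hh'cont.intervalIntegrable
  have hv'c : Continuous (fun t : ℝ => Complex.I * L * ((2*A*t + B : ℝ):ℂ) * e t) := by
    fun_prop
  -- integration by parts
  have key : ∫ t in a..b, e t * φ t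
      = h b * e b - h a * e a - ∫ t in a..b, h' t * e t := by
    have congr1 : ∫ t in a..b, e t * φ t
        = ∫ t in a..b, h t * (Complex.I * L * ((2*A*t + B : ℝ):ℂ) * e t) := by
      apply intervalIntegral.integral_congr
      intro t ht
      rw [huIcc] at ht
      have hne := hKp_ne t ht
      simp only [hh_def]
      rw [← mul_assoc, div_mul_cancel₀ _ hne, mul_comm]
    rw [congr1]
    exact intervalIntegral.integral_mul_deriv_eq_deriv_mul
      (fun t ht => sw_hh L A B φ hφ t (hKp_ne t (huIcc ▸ ht)))
      (fun t _ => sw_he L A B t)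
      hh'int (hv'c.intervalIntegrable a b)
  rw [key]
  -- bound on h at the endpoints
  have hbound_h : ∀ t ∈ Set.Icc a b, ‖h t‖ ≤ M / (L * m) := by
    intro t ht
    have h1 : ‖φ t‖ ≤ M := by
      have := hM t (hsub ht)
      have := norm_nonneg (deriv φ t)
      linarith
    rw [hh_def]
    simp only [norm_div]
    rw [hKp_norm t]
    apply div_le_div₀ hM0 h1 (by positivity)
    exact mul_le_mul_of_nonneg_left (hlow t ht) (le_of_lt hL)
  -- pointwise bound on h'
  have hptw : ∀ t ∈ Set.Icc a b, ‖h' t * e t‖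
      ≤ M / (L * m) + (2 * |A| * M / L) * (((2*A*t + B))^2)⁻¹ := by
    intro t ht
    have hpt := hlow t ht
    have hx : (0:ℝ) < |2*A*t+B| := lt_of_lt_of_le hm hpt
    have hMs := hM t (hsub ht)
    have hφt : ‖φ t‖ ≤ M := by have := norm_nonneg (deriv φ t); linarith
    have hφ't : ‖deriv φ t‖ ≤ M := by have := norm_nonneg (φ t); linarith
    rw [norm_mul, henorm, mul_one]
    simp only [hh'_def]
    rw [norm_div, norm_pow, hKp_norm]
    have hnum : ‖deriv φ t * (Complex.I * L * ((2*A*t + B : ℝ):ℂ)) -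
        φ t * (Complex.I * L * ((2*A : ℝ):ℂ))‖
        ≤ M * (L * |2*A*t+B|) + M * (L * (2*|A|)) := by
      calc ‖deriv φ t * (Complex.I * L * ((2*A*t + B : ℝ):ℂ)) -
            φ t * (Complex.I * L * ((2*A : ℝ):ℂ))‖
          ≤ ‖deriv φ t * (Complex.I * L * ((2*A*t + B : ℝ):ℂ))‖ +
            ‖φ t * (Complex.I * L * ((2*A : ℝ):ℂ))‖ := norm_sub_le _ _
        _ = ‖deriv φ t‖ * (L * |2*A*t+B|) + ‖φ t‖ * (L * |2*A|) := by
            rw [norm_mul (deriv φ t) _, norm_mul (φ t) _, hKp_norm, sw_normK L (2*A) hL]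
        _ ≤ M * (L * |2*A*t+B|) + M * (L * (2*|A|)) := by
            rw [abs_mul, abs_two]
            apply add_le_add <;>
              exact mul_le_mul_of_nonneg_right (by assumption) (by positivity)
    rw [← sq_abs (2*A*t+B)]
    calc ‖deriv φ t * (Complex.I * L * ((2*A*t + B : ℝ):ℂ)) -
          φ t * (Complex.I * L * ((2*A : ℝ):ℂ))‖ / (L * |2*A*t+B|)^2
        ≤ (M * (L * |2*A*t+B|) + M * (L * (2*|A|))) / (L * |2*A*t+B|)^2 := by
          gcongr
      _ ≤ M / (L * m) + (2 * |A| * M / L) * ((|2*A*t+B|)^2)⁻¹ :=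
          sw_arith L m (|2*A*t+B|) M (|A|) hL hm hpt hM0 (abs_nonneg A)
  -- integrability of the dominating function
  have hpcont : ContinuousOn (fun t => (((2*A*t + B))^2)⁻¹) (Set.Icc a b) :=
    ContinuousOn.inv₀ (by fun_prop) (fun t ht => pow_ne_zero 2 (hpne t ht))
  have hp2int : IntervalIntegrable (fun t => (((2*A*t + B))^2)⁻¹) volume a b := by
    apply ContinuousOn.intervalIntegrable
    rw [huIcc]; exact hpcont
  have hgint : IntervalIntegrable
      (fun t => M / (L * m) + (2 * |A| * M / L) * (((2*A*t + B))^2)⁻¹) volume a b :=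
    intervalIntegrable_const.add (hp2int.const_mul _)
  -- bound on the integral term
  have hInt2 : ‖∫ t in a..b, h' t * e t‖
      ≤ ∫ t in a..b, (M / (L * m) + (2 * |A| * M / L) * (((2*A*t + B))^2)⁻¹) := by
    calc ‖∫ t in a..b, h' t * e t‖ ≤ ∫ t in a..b, ‖h' t * e t‖ :=
          intervalIntegral.norm_integral_le_integral_norm hab
      _ ≤ _ := by
          apply intervalIntegral.integral_mono_on hab _ hgint hptw
          exact ((hh'cont.mul hec.continuousOn).norm).intervalIntegrable
  have hIntval : ∫ t in a..b, (M / (L * m) + (2 * |A| * M / L) * (((2*A*t + B))^2)⁻¹)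
      = (b - a) * (M / (L * m)) + (2 * |A| * M / L) * ∫ t in a..b, (((2*A*t + B))^2)⁻¹ := by
    rw [intervalIntegral.integral_add intervalIntegrable_const (hp2int.const_mul _),
      intervalIntegral.integral_const, intervalIntegral.integral_const_mul]
    simp [smul_eq_mul]
  have hswint := sw_int A B m a b hab hm hlow
  have hc2 : (2 * |A| * M / L) * ∫ t in a..b, (((2*A*t + B))^2)⁻¹ ≤ 2 * (M / (L * m)) := by
    have heq : (2 * |A| * M / L) * ∫ t in a..b, (((2*A*t + B))^2)⁻¹
        = (M / L) * (2*|A| * ∫ t in a..b, ((2*A*t + B)^2)⁻¹) := by ring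
    rw [heq]
    calc (M / L) * (2*|A| * ∫ t in a..b, ((2*A*t + B)^2)⁻¹)
        ≤ (M / L) * (2 / m) := mul_le_mul_of_nonneg_left hswint (by positivity)
      _ = 2 * (M / (L * m)) := by field_simp
  have hba : b - a ≤ 2 := by linarith
  have hc1 : (0:ℝ) ≤ M / (L * m) := by positivity
  have hfinal : ∫ t in a..b, (M / (L * m) + (2 * |A| * M / L) * (((2*A*t + B))^2)⁻¹)
      ≤ 4 * (M / (L * m)) := by
    rw [hIntval]
    have : (b - a) * (M / (L * m)) ≤ 2 * (M / (L * m)) :=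
      mul_le_mul_of_nonneg_right hba hc1
    linarith
  have hea := hbound_h a ⟨le_refl a, hab⟩
  have heb := hbound_h b ⟨hab, le_refl b⟩
  calc ‖h b * e b - h a * e a - ∫ t in a..b, h' t * e t‖
      ≤ ‖h b * e b - h a * e a‖ + ‖∫ t in a..b, h' t * e t‖ := norm_sub_le _ _
    _ ≤ (‖h b * e b‖ + ‖h a * e a‖) + ‖∫ t in a..b, h' t * e t‖ := by
        have := norm_sub_le (h b * e b) (h a * e a); linarith
    _ = (‖h b‖ + ‖h a‖) + ‖∫ t in a..b, h' t * e t‖ := by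
        rw [norm_mul, norm_mul, henorm, henorm, mul_one, mul_one]
    _ ≤ (M / (L * m) + M / (L * m)) + 4 * (M / (L * m)) := by
        have := le_trans hInt2 hfinal
        linarith
    _ = 6 * M / (L * m) := by ring

lemma sw_triv (L A B : ℝ) (φ : ℝ → ℂ)
    (M : ℝ) (hM : ∀ t ∈ Set.Icc (-1:ℝ) 1, ‖φ t‖ + ‖deriv φ t‖ ≤ M)
    (a b : ℝ) (hab : a ≤ b) (ha : -1 ≤ a) (hb : b ≤ 1) :
    ‖∫ t in a..b, Complex.exp (Complex.I * L * ((A*t^2 + B*t : ℝ):ℂ)) * φ t‖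
      ≤ (b - a) * M := by
  have h := intervalIntegral.norm_integral_le_of_norm_le_const
    (a := a) (b := b) (C := M)
    (f := fun t => Complex.exp (Complex.I * L * ((A*t^2 + B*t : ℝ):ℂ)) * φ t) ?_
  · rw [abs_of_nonneg (by linarith)] at h
    linarith [h]
  · intro t ht
    rw [Set.uIoc_of_le hab] at ht
    have ht' : t ∈ Set.Icc (-1:ℝ) 1 := ⟨by linarith [ht.1], le_trans ht.2 hb⟩
    rw [norm_mul, sw_norm_exp, one_mul]
    have := hM t ht'
    have := norm_nonneg (deriv φ t)
    linarith

set_option maxHeartbeats 1000000 in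
/-- Degree-2 Stein–Wainger estimate: for `(A,B) ≠ (0,0)`, `λ > 0`, and `φ` a `C¹`
function supported in `[-1,1]`,
`|∫ e^{iλ(At²+Bt)} φ(t) dt| ≤ C (λ(|A|+|B|))^{-1/2} sup(|φ|+|φ'|)`. -/
theorem stmt17 : ∃ C : ℝ, 0 < C ∧
    ∀ L : ℝ, 0 < L → ∀ A B : ℝ, ¬(A = 0 ∧ B = 0) →
    ∀ φ : ℝ → ℂ, ContDiff ℝ 1 φ → Function.support φ ⊆ Set.Icc (-1 : ℝ) 1 →
    ∀ M : ℝ, (∀ t ∈ Set.Icc (-1 : ℝ) 1, ‖φ t‖ + ‖deriv φ t‖ ≤ M) →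
      ‖∫ t : ℝ, Complex.exp (Complex.I * (L : ℂ) * (((A * t ^ 2 + B * t : ℝ)) : ℂ)) * φ t‖
        ≤ C * (L * (|A| + |B|)) ^ (-(1 : ℝ) / 2) * M := by
  refine ⟨18, by norm_num, ?_⟩
  intro L hL A B hAB φ hφ hsupp M hM
  have hM0 : 0 ≤ M := le_trans (by positivity) (hM 0 ⟨by norm_num, by norm_num⟩)
  have hABpos : 0 < |A| + |B| := by
    rcases not_and_or.mp hAB with h | h
    · have : 0 < |A| := abs_pos.mpr h
      have := abs_nonneg B
      linarith
    · have : 0 < |B| := abs_pos.mpr h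
      have := abs_nonneg A
      linarith
  set Λ : ℝ := L * (|A| + |B|) with hΛdef
  have hΛpos : 0 < Λ := by positivity
  have hrpow : Λ ^ (-(1:ℝ)/2) = (Real.sqrt Λ)⁻¹ := by
    rw [neg_div, Real.rpow_neg (le_of_lt hΛpos), Real.sqrt_eq_rpow]
  have hsqrtΛ : 0 < Real.sqrt Λ := Real.sqrt_pos.mpr hΛpos
  have hrpow_nonneg : 0 ≤ Λ ^ (-(1:ℝ)/2) := by rw [hrpow]; positivity
  -- reduce to the interval integral
  have hred : (∫ t : ℝ, Complex.exp (Complex.I * (L : ℂ) * (((A * t ^ 2 + B * t : ℝ)) : ℂ)) * φ t)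
      = ∫ t in (-1:ℝ)..1, Complex.exp (Complex.I * L * ((A*t^2 + B*t : ℝ):ℂ)) * φ t := by
    rw [intervalIntegral.integral_of_le (by norm_num : (-1:ℝ) ≤ 1),
      ← MeasureTheory.integral_Icc_eq_integral_Ioc]
    symm
    apply MeasureTheory.setIntegral_eq_integral_of_forall_compl_eq_zero
    intro t ht
    have : φ t = 0 := by
      by_contra h
      exact ht (hsupp (Function.mem_support.mpr h))
    rw [this, mul_zero]
  rw [hred]
  rcases le_or_gt Λ 1 with hΛ1 | hΛ1
  · -- small Λ : trivial bound
    have h1 := sw_triv L A B φ M hM (-1) 1 (by norm_num) le_rfl le_rfl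
    have h2 : (1:ℝ) ≤ Λ ^ (-(1:ℝ)/2) :=
      Real.one_le_rpow_of_pos_of_le_one_of_nonpos hΛpos hΛ1 (by norm_num)
    calc ‖∫ t in (-1:ℝ)..1, Complex.exp (Complex.I * L * ((A*t^2 + B*t : ℝ):ℂ)) * φ t‖
        ≤ (1 - (-1)) * M := h1
      _ = 2 * M := by ring
      _ ≤ 18 * Λ ^ (-(1:ℝ)/2) * M := by nlinarith
  · -- large Λ
    have hΛinv : Λ⁻¹ ≤ Λ ^ (-(1:ℝ)/2) := by
      have h := Real.rpow_le_rpow_of_exponent_le (le_of_lt hΛ1)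
        (by norm_num : (-1:ℝ) ≤ -(1:ℝ)/2)
      rwa [Real.rpow_neg_one] at h
    rcases le_or_gt (4*|A|) |B| with hcase | hcase
    · -- nonstationary case : |B| ≥ 4|A|
      have hBpos : 0 < |B| := by
        have := abs_nonneg A
        linarith
      have hm : 0 < |B|/2 := by linarith
      have hlow : ∀ t ∈ Set.Icc (-1:ℝ) 1, |B|/2 ≤ |2*A*t + B| := by
        intro t ht
        have htabs : |t| ≤ 1 := abs_le.mpr ⟨ht.1, ht.2⟩
        have h1 : |2*A*t| ≤ 2*|A| := by
          rw [abs_mul, abs_mul, abs_two]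
          nlinarith [abs_nonneg A]
        have h2 : |B| ≤ |2*A*t + B| + |2*A*t| := by
          calc |B| = |(2*A*t + B) - 2*A*t| := by ring_nf
            _ ≤ |2*A*t + B| + |2*A*t| := abs_sub _ _
        linarith
      have hibp := sw_ibp L A B hL φ hφ M hM (-1) 1 (|B|/2)
        (by norm_num) le_rfl le_rfl hm hlow
      have hkey : 6*M/(L*(|B|/2)) ≤ 15*M*Λ⁻¹ := by
        rw [show (15:ℝ)*M*Λ⁻¹ = 15*M/Λ by ring, div_le_div_iff₀ (by positivity) hΛpos]
        have hprod : 0 ≤ M*(L*(|B| - 4*|A|)) :=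
          mul_nonneg hM0 (mul_nonneg hL.le (by linarith))
        nlinarith [hprod, mul_pos hL hBpos, hM0]
      have hfin : 15*M*Λ⁻¹ ≤ 18 * Λ ^ (-(1:ℝ)/2) * M := by
        have := mul_le_mul_of_nonneg_left hΛinv (by linarith : (0:ℝ) ≤ 15*M)
        nlinarith [hrpow_nonneg, hM0]
      calc ‖∫ t in (-1:ℝ)..1, Complex.exp (Complex.I * L * ((A*t^2 + B*t : ℝ):ℂ)) * φ t‖
          ≤ 6*M/(L*(|B|/2)) := hibp
        _ ≤ 15*M*Λ⁻¹ := hkey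
        _ ≤ 18 * Λ ^ (-(1:ℝ)/2) * M := hfin
    · -- stationary case : |B| < 4|A|
      have hA : A ≠ 0 := by
        intro h
        rw [h] at hcase
        simp at hcase
        have := abs_nonneg B
        linarith
      have hApos : 0 < |A| := abs_pos.mpr hA
      set c : ℝ := -B/(2*A) with hcdef
      set δ : ℝ := (Real.sqrt (L*|A|))⁻¹ with hδdef
      have hLA : 0 < L*|A| := by positivity
      have hsq : 0 < Real.sqrt (L*|A|) := Real.sqrt_pos.mpr hLA
      have hδ : 0 < δ := by positivity
      have hδ2 : L*|A| * δ^2 = 1 := by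
        rw [hδdef, inv_pow, ← Real.sqrt_sq hLA.le]
        rw [Real.sqrt_sq hLA.le, Real.sq_sqrt hLA.le]
        field_simp
      have hrw : ∀ t : ℝ, 2*A*t + B = 2*A*(t - c) := by
        intro t
        rw [hcdef]
        field_simp
        ring
      set u : ℝ := max (-1) (min 1 (c - δ)) with hudef
      set v : ℝ := max (-1) (min 1 (c + δ)) with hvdef
      have hu1 : -1 ≤ u := le_max_left _ _
      have hu2 : u ≤ 1 := max_le (by norm_num) (min_le_left _ _)
      have hv1 : -1 ≤ v := le_max_left _ _
      have hv2 : v ≤ 1 := max_le (by norm_num) (min_le_left _ _)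
      have huv : u ≤ v := max_le_max le_rfl (min_le_min le_rfl (by linarith))
      -- v - u ≤ 2δ
      have hvu : v - u ≤ 2*δ := by
        have hmm : min 1 (c + δ) ≤ min 1 (c - δ) + 2*δ := by
          rcases le_total 1 (c - δ) with h | h
          · rw [min_eq_left h]
            have := min_le_left 1 (c + δ)
            linarith
          · rw [min_eq_right h]
            have := min_le_right 1 (c + δ)
            linarith
        have h1 : v ≤ max (-1) (min 1 (c - δ) + 2*δ) := max_le_max le_rfl hmm
        have h2 : max (-1) (min 1 (c - δ) + 2*δ) ≤ u + 2*δ := by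
          apply max_le
          · linarith
          · have := le_max_right (-1) (min 1 (c - δ))
            linarith
        linarith
      -- integrability of the integrand
      have hg : Continuous fun t : ℝ => Complex.I * L * ((A*t^2 + B*t : ℝ):ℂ) := by fun_prop
      have hfc : Continuous fun t : ℝ =>
          Complex.exp (Complex.I * L * ((A*t^2 + B*t : ℝ):ℂ)) * φ t :=
        (Complex.continuous_exp.comp hg).mul hφ.continuous
      have hI : ∀ a b : ℝ, IntervalIntegrable
          (fun t : ℝ => Complex.exp (Complex.I * L * ((A*t^2 + B*t : ℝ):ℂ)) * φ t)
          volume a b := fun a b => hfc.intervalIntegrable a b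
      have e2 := intervalIntegral.integral_add_adjacent_intervals (hI (-1) u) (hI u v)
      have e1 := intervalIntegral.integral_add_adjacent_intervals (hI (-1) v) (hI v 1)
      -- bound on the left piece
      have hleft : ‖∫ t in (-1:ℝ)..u,
          Complex.exp (Complex.I * L * ((A*t^2 + B*t : ℝ):ℂ)) * φ t‖ ≤ 3*M*δ := by
        rcases eq_or_lt_of_le hu1 with he | hlt
        · rw [← he, intervalIntegral.integral_same, norm_zero]
          positivity
        · have hue : u = min 1 (c - δ) := by
            rcases max_cases (-1) (min 1 (c - δ)) with ⟨h1, h2⟩ | ⟨h1, h2⟩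
            · rw [hudef] at hlt; rw [h1] at hlt; exact absurd hlt (lt_irrefl _)
            · rw [hudef, h1]
          have huc : u ≤ c - δ := by rw [hue]; exact min_le_right _ _
          have hlow2 : ∀ t ∈ Set.Icc (-1:ℝ) u, 2*|A| * δ ≤ |2*A*t + B| := by
            intro t ht
            rw [hrw t, abs_mul, abs_mul, abs_two]
            have htc : t - c ≤ -δ := by
              have := ht.2
              linarith
            have : |t - c| = c - t := by
              rw [abs_of_neg (by linarith)]
              ring
            rw [this]
            have : δ ≤ c - t := by linarith
            nlinarith [hApos]
          have hibp := sw_ibp L A B hL φ hφ M hM (-1) u (2*|A| * δ)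
            (le_of_lt hlt) le_rfl hu2 (by positivity) hlow2
          have heq : 6*M/(L*(2*|A| * δ)) = 3*M*δ := by
            rw [div_eq_iff (by positivity)]
            linear_combination (-6)*M*hδ2
          rw [heq] at hibp
          exact hibp
      -- bound on the right piece
      have hright : ‖∫ t in v..(1:ℝ),
          Complex.exp (Complex.I * L * ((A*t^2 + B*t : ℝ):ℂ)) * φ t‖ ≤ 3*M*δ := by
        rcases eq_or_lt_of_le hv2 with he | hlt
        · rw [he, intervalIntegral.integral_same, norm_zero]
          positivity
        · have hvc : c + δ ≤ v := by
            have hmin : min 1 (c + δ) = c + δ := by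
              rcases le_total (c + δ) 1 with h | h
              · exact min_eq_right h
              · exfalso
                have hv1' : v = 1 := by
                  rw [hvdef, min_eq_left h]
                  exact max_eq_right (by norm_num)
                rw [hv1'] at hlt
                exact lt_irrefl _ hlt
            rw [hvdef, hmin]
            exact le_max_right _ _
          have hlow2 : ∀ t ∈ Set.Icc v (1:ℝ), 2*|A| * δ ≤ |2*A*t + B| := by
            intro t ht
            rw [hrw t, abs_mul, abs_mul, abs_two]
            have htc : δ ≤ t - c := by
              have := ht.1
              linarith
            have : |t - c| = t - c := abs_of_nonneg (by linarith)
            rw [this]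
            nlinarith [hApos]
          have hibp := sw_ibp L A B hL φ hφ M hM v 1 (2*|A| * δ)
            (le_of_lt hlt) hv1 le_rfl (by positivity) hlow2
          have heq : 6*M/(L*(2*|A| * δ)) = 3*M*δ := by
            rw [div_eq_iff (by positivity)]
            linear_combination (-6)*M*hδ2
          rw [heq] at hibp
          exact hibp
      -- bound on the middle piece
      have hmid : ‖∫ t in u..v,
          Complex.exp (Complex.I * L * ((A*t^2 + B*t : ℝ):ℂ)) * φ t‖ ≤ 2*δ*M := by
        have := sw_triv L A B φ M hM u v huv hu1 hv2
        have h2 : (v - u) * M ≤ 2*δ*M := mul_le_mul_of_nonneg_right hvu hM0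
        linarith
      -- total bound
      have htotal : ‖∫ t in (-1:ℝ)..1,
          Complex.exp (Complex.I * L * ((A*t^2 + B*t : ℝ):ℂ)) * φ t‖ ≤ 8*M*δ := by
        rw [← e1, ← e2]
        calc ‖((∫ t in (-1:ℝ)..u, Complex.exp (Complex.I * L * ((A*t^2 + B*t : ℝ):ℂ)) * φ t)
              + ∫ t in u..v, Complex.exp (Complex.I * L * ((A*t^2 + B*t : ℝ):ℂ)) * φ t)
              + ∫ t in v..(1:ℝ), Complex.exp (Complex.I * L * ((A*t^2 + B*t : ℝ):ℂ)) * φ t‖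
            ≤ ‖(∫ t in (-1:ℝ)..u, Complex.exp (Complex.I * L * ((A*t^2 + B*t : ℝ):ℂ)) * φ t)
              + ∫ t in u..v, Complex.exp (Complex.I * L * ((A*t^2 + B*t : ℝ):ℂ)) * φ t‖
              + ‖∫ t in v..(1:ℝ), Complex.exp (Complex.I * L * ((A*t^2 + B*t : ℝ):ℂ)) * φ t‖ :=
              norm_add_le _ _
          _ ≤ (‖∫ t in (-1:ℝ)..u, Complex.exp (Complex.I * L * ((A*t^2 + B*t : ℝ):ℂ)) * φ t‖
              + ‖∫ t in u..v, Complex.exp (Complex.I * L * ((A*t^2 + B*t : ℝ):ℂ)) * φ t‖)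
              + ‖∫ t in v..(1:ℝ), Complex.exp (Complex.I * L * ((A*t^2 + B*t : ℝ):ℂ)) * φ t‖ := by
              have := norm_add_le
                (∫ t in (-1:ℝ)..u, Complex.exp (Complex.I * L * ((A*t^2 + B*t : ℝ):ℂ)) * φ t)
                (∫ t in u..v, Complex.exp (Complex.I * L * ((A*t^2 + B*t : ℝ):ℂ)) * φ t)
              linarith
          _ ≤ (3*M*δ + 2*δ*M) + 3*M*δ := by
              have h1 := hleft
              have h2 := hmid
              have h3 := hright
              gcongr <;> linarith
          _ = 8*M*δ := by ring
      -- convert 8Mδ to the final bound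
      have h5 : Λ ≤ 5*(L*|A|) := by
        rw [hΛdef]
        nlinarith [mul_nonneg hL.le (le_of_lt (sub_pos.mpr hcase))]
      have hsqrt5 : Real.sqrt Λ ≤ Real.sqrt 5 * Real.sqrt (L*|A|) := by
        rw [← Real.sqrt_mul (by norm_num : (0:ℝ) ≤ 5)]
        exact Real.sqrt_le_sqrt h5
      have hs5 : Real.sqrt 5 ≤ 9/4 := by
        have h := Real.sqrt_le_sqrt (by norm_num : (5:ℝ) ≤ (9/4)^2)
        rwa [Real.sqrt_sq (by norm_num : (0:ℝ) ≤ 9/4)] at h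
      have hchain : Real.sqrt Λ ≤ (9/4) * Real.sqrt (L*|A|) :=
        le_trans hsqrt5 (mul_le_mul_of_nonneg_right hs5 (Real.sqrt_nonneg _))
      have hfin : 8*M*δ ≤ 18 * Λ ^ (-(1:ℝ)/2) * M := by
        rw [hrpow, show (18:ℝ) * (Real.sqrt Λ)⁻¹ * M = 18*M/Real.sqrt Λ by ring,
          show (8:ℝ)*M*δ = 8*M/Real.sqrt (L*|A|) by rw [hδdef]; ring,
          div_le_div_iff₀ hsq hsqrtΛ]
        nlinarith [mul_le_mul_of_nonneg_left hchain (by positivity : (0:ℝ) ≤ 8*M)]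
      exact le_trans htotal hfin
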